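/- If $A = \{a_1, \ldots, a_k\}$ is a set of $k$ relatively prime positive integers, then the number $p_A(n)$ of partitions of $n$ with parts in $A$ satisfies $p_A(n) = \frac{n^{k-1}}{(k-1)!\,a_1 a_2 \cdots a_k} + O(n^{k-2})$. -/

import Mathlib

open Filter

/-- `f` is a representation of `n` with parts in `A` and multiplicities in `M`:
`n = ∑ a ∈ A, m_a * a` with each nonzero multiplicity lying in `M`. -/
def IsRepr (A M : Set ℕ) (n : ℕ) (f : ℕ →₀ ℕ) : Prop :=
  (∀ a ∈ f.support, a ∈ A) ∧ (∀ a ∈ f.support, f a ∈ M) ∧ f.sum (fun a m => m * a) = n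

/-- number of partitions of `n` with parts in `A` and multiplicities in `M` -/
noncomputable def pAM (A M : Set ℕ) (n : ℕ) : ℕ :=
  Nat.card {f : ℕ →₀ ℕ // IsRepr A M n f}

/-- number of partitions of `n` with parts in `A` (unrestricted multiplicities) -/
noncomputable def pA (A : Set ℕ) (n : ℕ) : ℕ :=
  pAM A {m | 0 < m} n

/-- counting function of a set of positive integers -/
noncomputable def cnt (S : Set ℕ) (x : ℝ) : ℕ :=
  Nat.card {a : ℕ // a ∈ S ∧ (a : ℝ) ≤ x}

open Finset

lemma isRepr_iff (A : Set ℕ) (n : ℕ) (f : ℕ →₀ ℕ) :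
    IsRepr A {m | 0 < m} n f ↔ (∀ a ∈ f.support, a ∈ A) ∧ f.sum (fun a m => m * a) = n := by
  unfold IsRepr
  simp only [Set.mem_setOf_eq]
  refine ⟨fun h => ⟨h.1, h.2.2⟩, fun h => ⟨h.1, fun a ha => Nat.pos_of_ne_zero ?_, h.2⟩⟩
  exact Finsupp.mem_support_iff.mp ha

lemma repr_apply_le {A : Finset ℕ} (hpos : ∀ a ∈ A, 0 < a) {n : ℕ} {f : ℕ →₀ ℕ}
    (hf : IsRepr ↑A {m | 0 < m} n f) (a : ℕ) : f a ≤ n := by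
  obtain ⟨hs, hsum⟩ := (isRepr_iff _ _ _).mp hf
  by_cases ha : a ∈ f.support
  · calc f a ≤ f a * a := Nat.le_mul_of_pos_right _ (hpos a (hs a ha))
    _ ≤ f.support.sum (fun x => f x * x) := Finset.single_le_sum (f := fun x => f x * x)
        (fun i _ => Nat.zero_le _) ha
    _ = n := hsum
  · simp [Finsupp.notMem_support_iff.mp ha]

lemma reprFinite (A : Finset ℕ) (hpos : ∀ a ∈ A, 0 < a) (n : ℕ) :
    Finite {f : ℕ →₀ ℕ // IsRepr ↑A {m | 0 < m} n f} := by
  have : Function.Injective (fun f : {f : ℕ →₀ ℕ // IsRepr ↑A {m | 0 < m} n f} =>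
      (fun a : ↥A => (⟨f.1 a, Nat.lt_succ_of_le (repr_apply_le hpos f.2 a)⟩ : Fin (n+1)))) := by
    rintro ⟨f, hf⟩ ⟨g, hg⟩ h
    ext x
    by_cases hx : x ∈ A
    · exact congrArg Fin.val (congrFun h ⟨x, hx⟩)
    · have h1 : x ∉ f.support := fun hc => hx (((isRepr_iff _ _ _).mp hf).1 x hc)
      have h2 : x ∉ g.support := fun hc => hx (((isRepr_iff _ _ _).mp hg).1 x hc)
      simp [Finsupp.notMem_support_iff.mp h1, Finsupp.notMem_support_iff.mp h2]
  exact Finite.of_injective _ this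

lemma pA_singleton (a : ℕ) (ha : 0 < a) (n : ℕ) :
    pA ↑({a} : Finset ℕ) n = if a ∣ n then 1 else 0 := by
  unfold pA pAM
  by_cases h : a ∣ n
  · rw [if_pos h]
    have hu : ∀ f : {f : ℕ →₀ ℕ // IsRepr ↑({a} : Finset ℕ) {m | 0 < m} n f},
        f.1 = Finsupp.single a (n / a) := by
      rintro ⟨f, hf⟩
      obtain ⟨hs, hsum⟩ := (isRepr_iff _ _ _).mp hf
      have hfs : f = Finsupp.single a (f a) := by
        ext x
        by_cases hx : x = a
        · simp [hx]
        · rw [Finsupp.single_apply, if_neg (Ne.symm hx)]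
          by_contra hc
          exact hx (by simpa using hs x (Finsupp.mem_support_iff.mpr hc))
      have hn : f a * a = n := by
        rw [hfs] at hsum; rwa [Finsupp.sum_single_index (by simp)] at hsum
      have hfa : f a = n / a := by rw [← hn, Nat.mul_div_cancel _ ha]
      rw [← hfa]; exact hfs
    have hne : Nonempty {f : ℕ →₀ ℕ // IsRepr ↑({a} : Finset ℕ) {m | 0 < m} n f} := by
      refine ⟨⟨Finsupp.single a (n / a), ?_⟩⟩
      rw [isRepr_iff]
      refine ⟨fun x hx => by simpa using Finsupp.support_single_subset hx, ?_⟩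
      rw [Finsupp.sum_single_index (by simp)]
      exact Nat.div_mul_cancel h
    have hsub : Subsingleton {f : ℕ →₀ ℕ // IsRepr ↑({a} : Finset ℕ) {m | 0 < m} n f} :=
      ⟨fun f g => Subtype.ext ((hu f).trans (hu g).symm)⟩
    exact Nat.card_unique
  · rw [if_neg h]
    have : IsEmpty {f : ℕ →₀ ℕ // IsRepr ↑({a} : Finset ℕ) {m | 0 < m} n f} := by
      constructor
      rintro ⟨f, hf⟩
      obtain ⟨hs, hsum⟩ := (isRepr_iff _ _ _).mp hf
      apply h
      rw [← hsum]
      apply Finset.dvd_sum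
      intro x hx
      have hxa : x = a := by simpa using hs x hx
      exact Dvd.dvd.mul_left (hxa ▸ dvd_refl a) _
    exact Nat.card_of_isEmpty

lemma sum_mul_eval (f g : ℕ →₀ ℕ) : (f+g).sum (fun a m => m*a) = f.sum (fun a m => m*a) + g.sum (fun a m => m*a) := by
  apply Finsupp.sum_add_index' <;> intros <;> simp [add_mul]

lemma pA_insert (a : ℕ) (ha : 0 < a) (A : Finset ℕ) (haA : a ∉ A) (hpos : ∀ x ∈ A, 0 < x) (n : ℕ) :
    pA ↑(insert a A) n = ∑ j ∈ range (n / a + 1), pA ↑A (n - j * a) := by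
  classical
  set α := {f : ℕ →₀ ℕ // IsRepr ↑(insert a A) {m | 0 < m} n f} with hα
  have hbound : ∀ f : α, f.1 a < n / a + 1 := by
    rintro ⟨f, hf⟩
    obtain ⟨hs, hsum⟩ := (isRepr_iff _ _ _).mp hf
    have : f a * a ≤ n := by
      by_cases hmem : a ∈ f.support
      · calc f a * a ≤ f.support.sum (fun x => f x * x) :=
          Finset.single_le_sum (f := fun x => f x * x) (fun i _ => Nat.zero_le _) hmem
        _ = n := hsum
      · simp [Finsupp.notMem_support_iff.mp hmem]
    exact Nat.lt_succ_of_le (Nat.le_div_iff_mul_le ha |>.mpr this)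
  set φ : α → Fin (n / a + 1) := fun f => ⟨f.1 a, hbound f⟩ with hφ
  set R : Fin (n / a + 1) → Type := fun j => {f : ℕ →₀ ℕ // IsRepr ↑A {m | 0 < m} (n - j.1 * a) f} with hR
  have E2 : ∀ j : Fin (n / a + 1), {f : α // φ f = j} ≃ R j := by
    intro j
    refine ⟨fun f => ⟨f.1.1.erase a, ?_⟩, fun g => ⟨⟨Finsupp.single a j.1 + g.1, ?_⟩, ?_⟩, ?_, ?_⟩
    · -- erase is repr of n - j*a
      obtain ⟨⟨f, hf⟩, hfj⟩ := f
      obtain ⟨hs, hsum⟩ := (isRepr_iff _ _ _).mp hf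
      have hfa : f a = j.1 := congrArg Fin.val hfj
      rw [isRepr_iff]
      constructor
      · intro x hx
        have hxs := Finsupp.support_erase (a := a) (f := f) ▸ hx
        have hxa : x ≠ a := (Finset.mem_erase.mp hxs).1
        have := hs x (Finset.mem_of_mem_erase hxs)
        simp only [Finset.coe_insert, Set.mem_insert_iff] at this
        exact this.resolve_left hxa
      · have hdecomp : Finsupp.single a (f a) + f.erase a = f := Finsupp.single_add_erase a f
        have h3 : f.sum (fun a m => m*a) =
            (Finsupp.single a (f a)).sum (fun a m => m*a) + (f.erase a).sum (fun a m => m*a) := by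
          rw [← sum_mul_eval, hdecomp]
        rw [Finsupp.sum_single_index (by simp)] at h3
        rw [hsum, hfa] at h3
        dsimp only
        omega
    · -- single + g is repr of n
      obtain ⟨g, hg⟩ := g
      obtain ⟨hs, hsum⟩ := (isRepr_iff _ _ _).mp hg
      rw [isRepr_iff]
      constructor
      · intro x hx
        have := Finsupp.support_add hx
        simp only [Finset.coe_insert, Set.mem_insert_iff]
        rcases Finset.mem_union.mp this with h | h
        · left; simpa using Finsupp.support_single_subset h
        · right; exact hs x h
      · rw [sum_mul_eval, Finsupp.sum_single_index (by simp), hsum]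
        have hja : j.1 * a ≤ n := by
          have hj' : j.1 ≤ n / a := Nat.lt_succ_iff.mp j.2
          calc j.1 * a ≤ (n / a) * a := Nat.mul_le_mul_right a hj'
          _ ≤ n := Nat.div_mul_le_self n a
        omega
    · -- φ value
      obtain ⟨g, hg⟩ := g
      obtain ⟨hs, hsum⟩ := (isRepr_iff _ _ _).mp hg
      have hga : a ∉ g.support := fun hc => haA (by simpa using hs a hc)
      apply Fin.ext
      show (Finsupp.single a j.1 + g) a = j.1
      simp [Finsupp.notMem_support_iff.mp hga]
    · -- left inverse
      rintro ⟨⟨f, hf⟩, hfj⟩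
      have hfa : f a = j.1 := congrArg Fin.val hfj
      apply Subtype.ext; apply Subtype.ext
      show Finsupp.single a j.1 + f.erase a = f
      rw [← hfa]
      exact Finsupp.single_add_erase a f
    · -- right inverse
      rintro ⟨g, hg⟩
      obtain ⟨hs, hsum⟩ := (isRepr_iff _ _ _).mp hg
      have hga : a ∉ g.support := fun hc => haA (by simpa using hs a hc)
      apply Subtype.ext
      show (Finsupp.single a j.1 + g).erase a = g
      rw [Finsupp.erase_add, Finsupp.erase_single, Finsupp.erase_of_notMem_support hga, zero_add]
  have E : α ≃ Σ j : Fin (n / a + 1), R j :=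
    (Equiv.sigmaFiberEquiv φ).symm.trans (Equiv.sigmaCongrRight E2)
  haveI : ∀ j, Finite (R j) := fun j => reprFinite A hpos _
  haveI : ∀ j, Fintype (R j) := fun j => Fintype.ofFinite _
  unfold pA pAM
  rw [show {f : ℕ →₀ ℕ // IsRepr ↑(insert a A) {m | 0 < m} n f} = α from rfl]
  rw [Nat.card_congr E, Nat.card_eq_fintype_card, Fintype.card_sigma]
  rw [← Fin.sum_univ_eq_sum_range (fun j => Nat.card {f : ℕ →₀ ℕ // IsRepr ↑A {m | 0 < m} (n - j * a) f})]
  exact Finset.sum_congr rfl fun j _ => (Nat.card_eq_fintype_card).symm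

lemma pow_sub_pow_bounds (x y : ℝ) (p : ℕ) (hx : 0 ≤ x) (hxy : x ≤ y) :
    (p+1 : ℝ) * x^p * (y - x) ≤ y^(p+1) - x^(p+1) ∧
    y^(p+1) - x^(p+1) ≤ (p+1 : ℝ) * y^p * (y - x) := by
  have hy : 0 ≤ y := hx.trans hxy
  have hgeom := geom_sum₂_mul y x (p+1)
  simp only [Nat.add_sub_cancel] at hgeom
  have hterm : ∀ i ∈ range (p+1), x^p ≤ y^i * x^(p-i) ∧ y^i * x^(p-i) ≤ y^p := by
    intro i hi
    have hi' : i ≤ p := Nat.lt_succ_iff.mp (mem_range.mp hi)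
    have e1 : x^i * x^(p-i) = x^p := by rw [← pow_add]; congr 1; omega
    have e2 : y^i * y^(p-i) = y^p := by rw [← pow_add]; congr 1; omega
    constructor
    · rw [← e1]
      exact mul_le_mul_of_nonneg_right (pow_le_pow_left₀ hx hxy i) (pow_nonneg hx _)
    · rw [← e2]
      exact mul_le_mul_of_nonneg_left (pow_le_pow_left₀ hx hxy _) (pow_nonneg hy _)
  have hsum_lo : (p+1 : ℝ) * x^p ≤ ∑ i ∈ range (p+1), y^i * x^(p-i) := by
    have : ∑ _i ∈ range (p+1), x^p ≤ ∑ i ∈ range (p+1), y^i * x^(p-i) :=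
      Finset.sum_le_sum (fun i hi => (hterm i hi).1)
    simpa [mul_comm] using this
  have hsum_hi : ∑ i ∈ range (p+1), y^i * x^(p-i) ≤ (p+1 : ℝ) * y^p := by
    have : ∑ i ∈ range (p+1), y^i * x^(p-i) ≤ ∑ _i ∈ range (p+1), y^p :=
      Finset.sum_le_sum (fun i hi => (hterm i hi).2)
    simpa [mul_comm] using this
  have hyx : 0 ≤ y - x := sub_nonneg.mpr hxy
  constructor
  · rw [← hgeom]; exact mul_le_mul_of_nonneg_right hsum_lo hyx
  · rw [← hgeom]; exact mul_le_mul_of_nonneg_right hsum_hi hyx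

lemma sum_range_pow_est (p m : ℕ) :
    |∑ i ∈ range (m+1), (i:ℝ)^p - (m:ℝ)^(p+1)/(p+1)| ≤ 2*((m:ℝ)+1)^p := by
  have hp1 : (0:ℝ) < (p:ℝ) + 1 := by positivity
  have key : ∀ i : ℕ, ((p:ℝ)+1) * (i:ℝ)^p ≤ ((i:ℝ)+1)^(p+1) - (i:ℝ)^(p+1) ∧
      ((i:ℝ)+1)^(p+1) - (i:ℝ)^(p+1) ≤ ((p:ℝ)+1) * ((i:ℝ)+1)^p := by
    intro i
    have h := pow_sub_pow_bounds (i:ℝ) ((i:ℝ)+1) p (Nat.cast_nonneg i) (by linarith)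
    constructor
    · have := h.1; simpa using this
    · have := h.2; simpa using this
  have htel : ∑ i ∈ range (m+1), (((i:ℝ)+1)^(p+1) - (i:ℝ)^(p+1)) = ((m:ℝ)+1)^(p+1) := by
    have := Finset.sum_range_sub (fun i => (i:ℝ)^(p+1)) (m+1)
    simp only [Nat.cast_add, Nat.cast_one] at this ⊢
    rw [show ∀ i : ℕ, ((i:ℝ)+1)^(p+1) = ((i+1 : ℕ):ℝ)^(p+1) from fun i => by push_cast; ring] at *
    · rw [this]; simp
  -- upper bound : (p+1) * S ≤ (m+1)^{p+1}
  have hup : ((p:ℝ)+1) * ∑ i ∈ range (m+1), (i:ℝ)^p ≤ ((m:ℝ)+1)^(p+1) := by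
    rw [Finset.mul_sum, ← htel]
    exact Finset.sum_le_sum (fun i _ => (key i).1)
  -- lower bound: (m+1)^{p+1} ≤ (p+1) * (S + (m+1)^p)
  have hlo : ((m:ℝ)+1)^(p+1) ≤ ((p:ℝ)+1) * (∑ i ∈ range (m+1), (i:ℝ)^p + ((m:ℝ)+1)^p) := by
    rw [← htel]
    calc ∑ i ∈ range (m+1), (((i:ℝ)+1)^(p+1) - (i:ℝ)^(p+1))
        ≤ ∑ i ∈ range (m+1), ((p:ℝ)+1) * ((i:ℝ)+1)^p :=
          Finset.sum_le_sum (fun i _ => (key i).2)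
      _ = ((p:ℝ)+1) * ∑ i ∈ range (m+1), ((i:ℝ)+1)^p := by rw [Finset.mul_sum]
      _ ≤ ((p:ℝ)+1) * (∑ i ∈ range (m+1), (i:ℝ)^p + ((m:ℝ)+1)^p) := by
          apply mul_le_mul_of_nonneg_left _ (le_of_lt hp1)
          have : ∑ i ∈ range (m+1), ((i:ℝ)+1)^p = ∑ i ∈ range (m+1), ((i+1:ℕ):ℝ)^p := by
            apply Finset.sum_congr rfl; intros; push_cast; ring
          rw [this]
          have h2 : ∑ i ∈ range (m+1), ((i+1:ℕ):ℝ)^p = (∑ i ∈ range (m+2), (i:ℝ)^p) - (0:ℝ)^p := by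
            rw [Finset.sum_range_succ' (fun i => (i:ℝ)^p) (m+1)]
            push_cast; ring
          rw [h2, Finset.sum_range_succ]
          have : (0:ℝ)^p ≥ 0 := by positivity
          push_cast
          linarith
  -- also (m+1)^{p+1} vs m^{p+1}
  have hshift := (pow_sub_pow_bounds (m:ℝ) ((m:ℝ)+1) p (Nat.cast_nonneg m) (by linarith)).2
  simp only [add_sub_cancel_left, mul_one] at hshift
  rw [abs_le]
  have hSpos : (0:ℝ) ≤ ((m:ℝ)+1)^p := by positivity
  have hmono : (m:ℝ)^(p+1) ≤ ((m:ℝ)+1)^(p+1) := pow_le_pow_left₀ (Nat.cast_nonneg m) (by linarith) _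
  set S := ∑ i ∈ range (m+1), (i:ℝ)^p with hS
  constructor
  · have h1 : (m:ℝ)^(p+1)/((p:ℝ)+1) ≤ S + ((m:ℝ)+1)^p := by
      rw [div_le_iff₀ hp1]
      nlinarith [hlo, hmono]
    linarith
  · have h2 : S ≤ ((m:ℝ)^(p+1) + ((p:ℝ)+1)*(((m:ℝ)+1)^p))/((p:ℝ)+1) := by
      rw [le_div_iff₀ hp1]
      nlinarith [hup, hshift]
    have h3 : ((m:ℝ)^(p+1) + ((p:ℝ)+1)*(((m:ℝ)+1)^p))/((p:ℝ)+1)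
        = (m:ℝ)^(p+1)/((p:ℝ)+1) + ((m:ℝ)+1)^p := by
      field_simp
    rw [h3] at h2
    linarith

lemma pow_diff_le (x d : ℝ) (p : ℕ) (hx : 0 ≤ x) (hd : 0 ≤ d) :
    (x+d)^p - x^p ≤ p * (x+d)^(p-1) * d := by
  cases p with
  | zero => simp
  | succ q =>
    have h := (pow_sub_pow_bounds x (x+d) q hx (by linarith)).2
    simp only [add_sub_cancel_left] at h
    simpa using h

lemma filter_mod_eq_image (L r n : ℕ) (hL : 0 < L) (hr : r < L) (hrn : r ≤ n) :
    (range (n+1)).filter (fun t => t % L = r) =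
      (range ((n-r)/L + 1)).image (fun i => r + i*L) := by
  ext t
  simp only [mem_filter, mem_range, mem_image]
  constructor
  · rintro ⟨htn, htr⟩
    have hdm : L * (t / L) + t % L = t := Nat.div_add_mod t L
    rw [Nat.mul_comm] at hdm
    refine ⟨t / L, ?_, by omega⟩
    have h2 : (t/L)*L ≤ n - r := by omega
    have h3 := (Nat.le_div_iff_mul_le hL).mpr h2
    omega
  · rintro ⟨i, hi, rfl⟩
    have : i*L ≤ n - r := (Nat.le_div_iff_mul_le hL).mp (by omega)
    constructor
    · omega
    · simp [Nat.add_mul_mod_self_right, Nat.mod_eq_of_lt hr]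

lemma ap_sum_est (L p : ℕ) (hL : 0 < L) : ∃ C : ℝ, 0 ≤ C ∧ ∀ r n : ℕ, r < L →
    |∑ t ∈ (range (n+1)).filter (fun t => t % L = r), (t:ℝ)^p - (n:ℝ)^(p+1)/(((p:ℝ)+1)*L)| ≤
      C * ((n:ℝ)+1)^p := by
  have hLR : (0:ℝ) < L := by exact_mod_cast hL
  have hp1 : (0:ℝ) < (p:ℝ)+1 := by positivity
  refine ⟨(p:ℝ) * (L:ℝ)^p + 2*(L:ℝ)^p + 2, by positivity, ?_⟩
  intro r n hr
  have hn1 : (0:ℝ) ≤ (n:ℝ)+1 := by positivity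
  by_cases hrn : r ≤ n
  swap
  · -- empty sum
    have hempty : (range (n+1)).filter (fun t => t % L = r) = ∅ := by
      apply Finset.filter_false_of_mem
      intro t ht
      have := mem_range.mp ht
      intro hc
      have : t % L ≤ t := Nat.mod_le t L
      omega
    rw [hempty]
    simp only [Finset.sum_empty, zero_sub, abs_neg]
    rw [abs_of_nonneg (by positivity)]
    have hnL : (n:ℝ) ≤ (L:ℝ) := by
      have : n < L := by omega
      exact_mod_cast this.le
    have h1 : (n:ℝ)^(p+1) ≤ ((n:ℝ)+1)^p * (L:ℝ) * 1 := by
      rw [pow_succ]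
      have : (n:ℝ)^p ≤ ((n:ℝ)+1)^p := pow_le_pow_left₀ (Nat.cast_nonneg n) (by linarith) p
      nlinarith [Nat.cast_nonneg (α := ℝ) n, pow_nonneg (Nat.cast_nonneg (α := ℝ) n) p]
    rw [div_le_iff₀ (by positivity)]
    calc (n:ℝ)^(p+1) ≤ ((n:ℝ)+1)^p * (L:ℝ) * 1 := h1
      _ ≤ ((n:ℝ)+1)^p * (L:ℝ) * ((p:ℝ)+1) := by
          apply mul_le_mul_of_nonneg_left (by linarith) (by positivity)
      _ = (((n:ℝ)+1)^p * (L:ℝ) * ((p:ℝ)+1)) * 1 := by ring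
      _ ≤ (((n:ℝ)+1)^p * (L:ℝ) * ((p:ℝ)+1)) * ((p:ℝ)*(L:ℝ)^p + 2*(L:ℝ)^p + 2) := by
          apply mul_le_mul_of_nonneg_left _ (by positivity)
          have hLp : (1:ℝ) ≤ (L:ℝ)^p := one_le_pow₀ (by exact_mod_cast hL)
          have hp0 : (0:ℝ) ≤ (p:ℝ) := Nat.cast_nonneg p
          nlinarith
      _ = ((p:ℝ)*(L:ℝ)^p + 2*(L:ℝ)^p + 2) * ((n:ℝ)+1)^p * (((p:ℝ)+1)*(L:ℝ)) := by ring
  · -- main case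
    set m' := (n - r)/L with hm'
    rw [filter_mod_eq_image L r n hL hr hrn]
    rw [Finset.sum_image (by intro a _ b _ h; exact Nat.eq_of_mul_eq_mul_right hL (by dsimp only at h; omega))]
    -- now ∑ i in range (m'+1), ((r + i*L : ℕ):ℝ)^p
    have hdm : L * ((n-r)/L) + (n-r) % L = n - r := Nat.div_add_mod (n-r) L
    rw [← hm'] at hdm
    have hmod : (n-r) % L < L := Nat.mod_lt _ hL
    have hLm'nat : L * m' ≤ n := by omega
    have hLm'n : (L:ℝ) * (m':ℝ) ≤ (n:ℝ) := by exact_mod_cast hLm'nat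
    have hgapnat : n ≤ L*m' + 2*L := by omega
    have hgap : (n:ℝ) - (L:ℝ)*(m':ℝ) ≤ 2*(L:ℝ) := by
      have : (n:ℝ) ≤ (L:ℝ)*(m':ℝ) + 2*(L:ℝ) := by exact_mod_cast hgapnat
      linarith
    -- step 1
    have hterm : ∀ i ∈ range (m'+1),
        |((r + i*L : ℕ):ℝ)^p - ((L:ℝ)*(i:ℝ))^p| ≤ (p:ℝ) * ((L:ℝ)*((m':ℝ)+1))^(p-1) * (L:ℝ) := by
      intro i hi
      have hi' : i ≤ m' := Nat.lt_succ_iff.mp (mem_range.mp hi)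
      have hiR : (i:ℝ) ≤ (m':ℝ) := by exact_mod_cast hi'
      have hcast : ((r + i*L : ℕ):ℝ) = (L:ℝ)*(i:ℝ) + (r:ℝ) := by push_cast; ring
      rw [hcast]
      have h0 : (0:ℝ) ≤ (L:ℝ)*(i:ℝ) := by positivity
      have hrR : (0:ℝ) ≤ (r:ℝ) := Nat.cast_nonneg r
      have hdiff := pow_diff_le ((L:ℝ)*(i:ℝ)) (r:ℝ) p h0 hrR
      have hnonneg : (0:ℝ) ≤ ((L:ℝ)*(i:ℝ) + (r:ℝ))^p - ((L:ℝ)*(i:ℝ))^p := by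
        have := pow_le_pow_left₀ h0 (le_add_of_nonneg_right hrR) p
        linarith
      rw [abs_of_nonneg hnonneg]
      have hbase : (L:ℝ)*(i:ℝ) + (r:ℝ) ≤ (L:ℝ)*((m':ℝ)+1) := by
        have hrL : (r:ℝ) ≤ (L:ℝ) := by exact_mod_cast hr.le
        nlinarith
      calc ((L:ℝ)*(i:ℝ) + (r:ℝ))^p - ((L:ℝ)*(i:ℝ))^p
          ≤ (p:ℝ) * ((L:ℝ)*(i:ℝ)+(r:ℝ))^(p-1) * (r:ℝ) := hdiff
        _ ≤ (p:ℝ) * ((L:ℝ)*((m':ℝ)+1))^(p-1) * (L:ℝ) := by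
            apply mul_le_mul
            · apply mul_le_mul_of_nonneg_left _ (Nat.cast_nonneg p)
              exact pow_le_pow_left₀ (by linarith) hbase _
            · exact_mod_cast hr.le
            · exact hrR
            · positivity
    have hstep1 : |∑ i ∈ range (m'+1), ((r + i*L : ℕ):ℝ)^p - (L:ℝ)^p * ∑ i ∈ range (m'+1), (i:ℝ)^p|
        ≤ ((m':ℝ)+1) * ((p:ℝ) * ((L:ℝ)*((m':ℝ)+1))^(p-1) * (L:ℝ)) := by
      rw [Finset.mul_sum, ← Finset.sum_sub_distrib]
      calc |∑ i ∈ range (m'+1), (((r + i*L : ℕ):ℝ)^p - (L:ℝ)^p * (i:ℝ)^p)|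
          ≤ ∑ i ∈ range (m'+1), |((r + i*L : ℕ):ℝ)^p - (L:ℝ)^p * (i:ℝ)^p| :=
            Finset.abs_sum_le_sum_abs _ _
        _ ≤ ∑ _i ∈ range (m'+1), (p:ℝ) * ((L:ℝ)*((m':ℝ)+1))^(p-1) * (L:ℝ) := by
            apply Finset.sum_le_sum
            intro i hi
            have := hterm i hi
            rwa [mul_pow] at this
        _ = ((m':ℝ)+1) * ((p:ℝ) * ((L:ℝ)*((m':ℝ)+1))^(p-1) * (L:ℝ)) := by
            rw [Finset.sum_const, card_range]; push_cast; ring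
    -- step 2: sum_range_pow_est
    have hsum_est := sum_range_pow_est p m'
    have hstep2 : |(L:ℝ)^p * ∑ i ∈ range (m'+1), (i:ℝ)^p - (L:ℝ)^p * ((m':ℝ)^(p+1)/((p:ℝ)+1))|
        ≤ 2 * (L:ℝ)^p * ((m':ℝ)+1)^p := by
      rw [← mul_sub, abs_mul, abs_of_nonneg (pow_nonneg hLR.le p)]
      calc (L:ℝ)^p * |∑ i ∈ range (m'+1), (i:ℝ)^p - (m':ℝ)^(p+1)/((p:ℝ)+1)|
          ≤ (L:ℝ)^p * (2*((m':ℝ)+1)^p) := mul_le_mul_of_nonneg_left hsum_est (pow_nonneg hLR.le p)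
        _ = 2 * (L:ℝ)^p * ((m':ℝ)+1)^p := by ring
    -- step 3
    have hmono3 : ((L:ℝ)*(m':ℝ))^(p+1) ≤ (n:ℝ)^(p+1) :=
      pow_le_pow_left₀ (by positivity) hLm'n _
    have hub3 := (pow_sub_pow_bounds ((L:ℝ)*(m':ℝ)) (n:ℝ) p (by positivity) hLm'n).2
    have hstep3 : |(L:ℝ)^p * ((m':ℝ)^(p+1)/((p:ℝ)+1)) - (n:ℝ)^(p+1)/(((p:ℝ)+1)*(L:ℝ))|
        ≤ 2 * (n:ℝ)^p := by
      have hU : (L:ℝ)^p * ((m':ℝ)^(p+1)/((p:ℝ)+1)) = ((L:ℝ)*(m':ℝ))^(p+1)/(((p:ℝ)+1)*(L:ℝ)) := by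
        rw [mul_pow]
        field_simp
        ring
      rw [hU, div_sub_div_same, abs_div, abs_of_nonneg (by positivity : (0:ℝ) ≤ ((p:ℝ)+1)*(L:ℝ)),
        div_le_iff₀ (by positivity)]
      rw [abs_of_nonpos (by linarith), neg_sub]
      have hnp : (0:ℝ) ≤ (n:ℝ)^p := by positivity
      calc (n:ℝ)^(p+1) - ((L:ℝ)*(m':ℝ))^(p+1) ≤ ((p:ℝ)+1) * (n:ℝ)^p * ((n:ℝ) - (L:ℝ)*(m':ℝ)) := hub3
        _ ≤ ((p:ℝ)+1) * (n:ℝ)^p * (2*(L:ℝ)) := by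
            apply mul_le_mul_of_nonneg_left hgap (by positivity)
        _ = 2 * (n:ℝ)^p * (((p:ℝ)+1)*(L:ℝ)) := by ring
    -- bound B1
    have hL1 : (1:ℝ) ≤ (L:ℝ) := by exact_mod_cast hL
    have hXn : (L:ℝ)*((m':ℝ)+1) ≤ ((n:ℝ)+1)*(L:ℝ) := by
      nlinarith [mul_nonneg (Nat.cast_nonneg (α := ℝ) n) (sub_nonneg.mpr hL1)]
    have hB1 : ((m':ℝ)+1) * ((p:ℝ) * ((L:ℝ)*((m':ℝ)+1))^(p-1) * (L:ℝ))
        ≤ (p:ℝ) * ((L:ℝ)^p * ((n:ℝ)+1)^p) := by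
      cases p with
      | zero => simp
      | succ q =>
        have hXpos : (0:ℝ) ≤ (L:ℝ)*((m':ℝ)+1) := by positivity
        have e1 : ((m':ℝ)+1) * (((q:ℕ)+1:ℝ) * ((L:ℝ)*((m':ℝ)+1))^(q+1-1) * (L:ℝ))
            = ((q:ℝ)+1) * ((L:ℝ)*((m':ℝ)+1))^(q+1) := by
          simp only [Nat.add_sub_cancel]
          rw [pow_succ]
          push_cast
          ring
        have e2 : ((L:ℝ)*((m':ℝ)+1))^(q+1) ≤ (L:ℝ)^(q+1) * ((n:ℝ)+1)^(q+1) := by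
          calc ((L:ℝ)*((m':ℝ)+1))^(q+1) ≤ (((n:ℝ)+1)*(L:ℝ))^(q+1) :=
            pow_le_pow_left₀ hXpos hXn _
          _ = (L:ℝ)^(q+1) * ((n:ℝ)+1)^(q+1) := by rw [mul_pow]; ring
        push_cast
        push_cast at e1
        rw [e1]
        exact mul_le_mul_of_nonneg_left e2 (by positivity)
    -- combine
    have hm'n1 : ((m':ℝ)+1)^p ≤ ((n:ℝ)+1)^p := by
      apply pow_le_pow_left₀ (by positivity)
      have : m' ≤ n := le_trans (Nat.div_le_self _ _) (Nat.sub_le n r)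
      have : (m':ℝ) ≤ (n:ℝ) := by exact_mod_cast this
      linarith
    have hnn1 : (n:ℝ)^p ≤ ((n:ℝ)+1)^p :=
      pow_le_pow_left₀ (Nat.cast_nonneg n) (by linarith) p
    have htri := abs_sub_le (∑ i ∈ range (m'+1), ((r + i*L : ℕ):ℝ)^p)
      ((L:ℝ)^p * ∑ i ∈ range (m'+1), (i:ℝ)^p) ((n:ℝ)^(p+1)/(((p:ℝ)+1)*(L:ℝ)))
    have htri2 := abs_sub_le ((L:ℝ)^p * ∑ i ∈ range (m'+1), (i:ℝ)^p)
      ((L:ℝ)^p * ((m':ℝ)^(p+1)/((p:ℝ)+1))) ((n:ℝ)^(p+1)/(((p:ℝ)+1)*(L:ℝ)))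
    have hLpnn : (0:ℝ) ≤ (L:ℝ)^p := pow_nonneg hLR.le p
    calc |∑ i ∈ range (m'+1), ((r + i*L : ℕ):ℝ)^p - (n:ℝ)^(p+1)/(((p:ℝ)+1)*(L:ℝ))| ≤ _ := htri
      _ ≤ ((m':ℝ)+1) * ((p:ℝ) * ((L:ℝ)*((m':ℝ)+1))^(p-1) * (L:ℝ))
          + (2 * (L:ℝ)^p * ((m':ℝ)+1)^p + 2 * (n:ℝ)^p) := by
          have := le_trans htri2 (add_le_add hstep2 hstep3)
          exact add_le_add hstep1 this
      _ ≤ (p:ℝ) * ((L:ℝ)^p * ((n:ℝ)+1)^p) + (2 * (L:ℝ)^p * ((n:ℝ)+1)^p + 2 * ((n:ℝ)+1)^p) := by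
          have h2 : 2 * (L:ℝ)^p * ((m':ℝ)+1)^p ≤ 2 * (L:ℝ)^p * ((n:ℝ)+1)^p :=
            mul_le_mul_of_nonneg_left hm'n1 (by positivity)
          exact add_le_add hB1 (add_le_add h2 (by linarith))
      _ = ((p:ℝ) * (L:ℝ)^p + 2*(L:ℝ)^p + 2) * ((n:ℝ)+1)^p := by ring

lemma cong_empty (a₀ d' n : ℕ) (hd : ¬ Nat.gcd a₀ d' ∣ n) :
    ∀ t : ℕ, ¬(t % a₀ = n % a₀ ∧ d' ∣ t) := by
  rintro t ⟨h1, h2⟩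
  apply hd
  have hmod : Nat.ModEq a₀ t n := h1
  have hdvd1 : (a₀:ℤ) ∣ (n:ℤ) - (t:ℤ) := (Nat.modEq_iff_dvd).mp hmod
  have hg : (Nat.gcd a₀ d' : ℤ) ∣ (n:ℤ) := by
    have ha : (Nat.gcd a₀ d' : ℤ) ∣ (a₀:ℤ) := Int.natCast_dvd_natCast.mpr (Nat.gcd_dvd_left _ _)
    have hb : (Nat.gcd a₀ d' : ℤ) ∣ (d':ℤ) := Int.natCast_dvd_natCast.mpr (Nat.gcd_dvd_right _ _)
    have h3 : (Nat.gcd a₀ d' : ℤ) ∣ (t:ℤ) := hb.trans (Int.natCast_dvd_natCast.mpr h2)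
    have h4 : (Nat.gcd a₀ d' : ℤ) ∣ (n:ℤ) - (t:ℤ) := ha.trans hdvd1
    have := dvd_add h4 h3
    simpa using this
  exact_mod_cast hg

lemma cong_combine (a₀ d' n : ℕ) (ha : 0 < a₀) (hd' : 0 < d')
    (hd : Nat.gcd a₀ d' ∣ n) :
    ∃ r < Nat.lcm a₀ d', ∀ t : ℕ, (t % a₀ = n % a₀ ∧ d' ∣ t) ↔ t % Nat.lcm a₀ d' = r := by
  set L := Nat.lcm a₀ d' with hLdef
  have hL : 0 < L := Nat.pos_of_ne_zero (Nat.lcm_ne_zero ha.ne' hd'.ne')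
  -- construct t₀ : ℤ
  obtain ⟨c, hc⟩ := hd
  have hbez := Nat.gcd_eq_gcd_ab a₀ d'
  set x := Nat.gcdA a₀ d' with hx
  set y := Nat.gcdB a₀ d' with hy
  set t₀ : ℤ := (d':ℤ) * y * (c:ℤ) with ht₀
  have hdvd_t₀ : (d':ℤ) ∣ t₀ := ⟨y * c, by ring⟩
  have ha_nt₀ : (a₀:ℤ) ∣ (n:ℤ) - t₀ := by
    refine ⟨x * c, ?_⟩
    have hn : (n:ℤ) = (Nat.gcd a₀ d' : ℤ) * c := by exact_mod_cast congrArg (Nat.cast : ℕ → ℤ) hc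
    rw [hn, hbez, ht₀]; ring
  have hLpos : (0:ℤ) < (L:ℤ) := by exact_mod_cast hL
  refine ⟨(t₀ % L).toNat, ?_, ?_⟩
  · have h1 : t₀ % L < L := Int.emod_lt_of_pos t₀ hLpos
    have h2 : 0 ≤ t₀ % L := Int.emod_nonneg t₀ hLpos.ne'
    omega
  · intro t
    have hcast : ((t₀ % L).toNat : ℤ) = t₀ % L :=
      Int.toNat_of_nonneg (Int.emod_nonneg t₀ hLpos.ne')
    have hkey : t % L = (t₀ % L).toNat ↔ (L:ℤ) ∣ (t:ℤ) - t₀ := by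
      constructor
      · intro h
        have h5 : ((t % L : ℕ) : ℤ) = t₀ % L := by rw [h, hcast]
        rw [Int.natCast_mod] at h5
        have hme : Int.ModEq (L:ℤ) (t₀:ℤ) (t:ℤ) := h5.symm
        exact hme.dvd
      · intro h
        have hme : Int.ModEq (L:ℤ) (t₀:ℤ) (t:ℤ) := Int.modEq_iff_dvd.mpr h
        have hmodeq : (t:ℤ) % L = t₀ % L := hme.symm
        have h5 : ((t % L : ℕ) : ℤ) = ((t₀ % L).toNat : ℤ) := by
          rw [Int.natCast_mod, hcast, hmodeq]
        exact_mod_cast h5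
    rw [hkey]
    constructor
    · rintro ⟨h1, h2⟩
      have hdvd1 : (a₀:ℤ) ∣ (n:ℤ) - (t:ℤ) := (Nat.modEq_iff_dvd).mp h1
      have hA : (a₀:ℤ) ∣ (t:ℤ) - t₀ := by
        have := dvd_sub ha_nt₀ hdvd1
        have h3 : (n:ℤ) - t₀ - ((n:ℤ) - (t:ℤ)) = (t:ℤ) - t₀ := by ring
        rwa [h3] at this
      have hB : (d':ℤ) ∣ (t:ℤ) - t₀ := dvd_sub (Int.natCast_dvd_natCast.mpr h2) hdvd_t₀
      have hlcm : (Int.lcm (a₀:ℤ) (d':ℤ) : ℤ) ∣ (t:ℤ) - t₀ := Int.coe_lcm_dvd hA hB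
      rwa [Int.lcm_natCast_natCast] at hlcm
    · intro h
      have hA : (a₀:ℤ) ∣ (t:ℤ) - t₀ := dvd_trans (Int.natCast_dvd_natCast.mpr (Nat.dvd_lcm_left a₀ d')) h
      have hB : (d':ℤ) ∣ (t:ℤ) - t₀ := dvd_trans (Int.natCast_dvd_natCast.mpr (Nat.dvd_lcm_right a₀ d')) h
      constructor
      · have : (a₀:ℤ) ∣ (n:ℤ) - (t:ℤ) := by
          have := dvd_sub ha_nt₀ hA
          have h3 : (n:ℤ) - t₀ - ((t:ℤ) - t₀) = (n:ℤ) - (t:ℤ) := by ring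
          rwa [h3] at this
        exact (Nat.modEq_iff_dvd).mpr this
      · have : (d':ℤ) ∣ (t:ℤ) := by
          have := dvd_add hB hdvd_t₀
          simpa using this
        exact_mod_cast this

lemma image_sub_mul (a₀ n : ℕ) (ha : 0 < a₀) :
    (range (n/a₀ + 1)).image (fun j => n - j*a₀) =
      (range (n+1)).filter (fun t => t % a₀ = n % a₀) := by
  ext t
  simp only [mem_filter, mem_range, mem_image]
  constructor
  · rintro ⟨j, hj, rfl⟩
    have hj' : j ≤ n/a₀ := Nat.lt_succ_iff.mp hj
    have hja : j*a₀ ≤ n := (Nat.le_div_iff_mul_le ha).mp hj'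
    refine ⟨by omega, ?_⟩
    have : n = (n - j*a₀) + j*a₀ := by omega
    conv_rhs => rw [this]
    rw [Nat.add_mul_mod_self_right]
  · rintro ⟨htn, htr⟩
    have hdvd : a₀ ∣ n - t := (Nat.modEq_iff_dvd' (by omega)).mp htr
    obtain ⟨j, hj⟩ := hdvd
    rw [Nat.mul_comm] at hj
    refine ⟨j, ?_, by omega⟩
    have : j*a₀ ≤ n := by omega
    have := (Nat.le_div_iff_mul_le ha).mpr this
    omega

lemma sum_range_reindex (a₀ n : ℕ) (ha : 0 < a₀) (g : ℕ → ℝ) :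
    ∑ j ∈ range (n/a₀ + 1), g (n - j*a₀) =
      ∑ t ∈ (range (n+1)).filter (fun t => t % a₀ = n % a₀), g t := by
  rw [← image_sub_mul a₀ n ha, Finset.sum_image]
  intro x hx y hy hxy
  have hx' : x*a₀ ≤ n := (Nat.le_div_iff_mul_le ha).mp (Nat.lt_succ_iff.mp (mem_range.mp hx))
  have hy' : y*a₀ ≤ n := (Nat.le_div_iff_mul_le ha).mp (Nat.lt_succ_iff.mp (mem_range.mp hy))
  have : x*a₀ = y*a₀ := by dsimp only at hxy; omega
  exact Nat.eq_of_mul_eq_mul_right ha this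

theorem main_ind : ∀ k : ℕ, ∀ A : Finset ℕ, A.card = k + 1 → (∀ a ∈ A, 0 < a) →
    ∃ C : ℝ, 0 ≤ C ∧ ∀ n : ℕ,
      |(pA ↑A n : ℝ) - (if A.gcd id ∣ n then
          ((A.gcd id : ℕ) : ℝ) * (n:ℝ)^k / ((k.factorial : ℝ) * ∏ a ∈ A, (a:ℝ)) else 0)|
        ≤ C * (if k = 0 then 0 else ((n:ℝ)+1)^(k-1)) := by
  intro k
  induction k with
  | zero =>
    intro A hcard hpos
    obtain ⟨a, rfl⟩ := Finset.card_eq_one.mp hcard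
    have ha : 0 < a := hpos a (mem_singleton_self a)
    refine ⟨0, le_refl 0, fun n => ?_⟩
    rw [pA_singleton a ha n]
    have hgcd : ({a} : Finset ℕ).gcd id = a := by simp [Finset.gcd_singleton]
    rw [hgcd]
    simp only [Finset.prod_singleton, Nat.factorial_zero, pow_zero]
    by_cases h : a ∣ n
    · rw [if_pos h, if_pos h]
      have haR : (a:ℝ) ≠ 0 := by exact_mod_cast ha.ne'
      rw [show ((1:ℕ):ℝ) = 1 by norm_num]
      rw [mul_one, show (1:ℝ) * (a:ℝ) = (a:ℝ) by ring, div_self haR]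
      simp
    · rw [if_neg h, if_neg h]; simp
  | succ k ih =>
    intro A hcard hpos
    have hAne : A.Nonempty := Finset.card_pos.mp (by omega)
    obtain ⟨a₀, ha₀⟩ := hAne
    set A' := A.erase a₀ with hA'def
    have hins : insert a₀ A' = A := Finset.insert_erase ha₀
    have ha₀A' : a₀ ∉ A' := Finset.notMem_erase a₀ A
    have ha₀pos : 0 < a₀ := hpos a₀ ha₀
    have hpos' : ∀ a ∈ A', 0 < a := fun a haa => hpos a (Finset.mem_of_mem_erase haa)
    have hcard' : A'.card = k + 1 := by
      rw [hA'def, Finset.card_erase_of_mem ha₀]; omega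
    set d' := A'.gcd id with hd'def
    have hA'ne : A'.Nonempty := Finset.card_pos.mp (by omega)
    obtain ⟨b, hb⟩ := hA'ne
    have hd'pos : 0 < d' := by
      rcases Nat.eq_zero_or_pos d' with h | h
      · exfalso
        have hdvdb : d' ∣ id b := Finset.gcd_dvd hb
        rw [h] at hdvdb
        have hb0 : b = 0 := Nat.eq_zero_of_zero_dvd (by simpa using hdvdb)
        have := hpos' b hb
        omega
      · exact h
    have hgcdA : A.gcd id = Nat.gcd a₀ d' := by
      rw [← hins, Finset.gcd_insert]
      rfl
    set d := A.gcd id with hddef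
    set L := Nat.lcm a₀ d' with hLdef
    have hL : 0 < L := Nat.pos_of_ne_zero (Nat.lcm_ne_zero ha₀pos.ne' hd'pos.ne')
    set P' := ∏ a ∈ A', (a:ℝ) with hP'def
    have hP'pos : (0:ℝ) < P' := Finset.prod_pos (fun a haa => by exact_mod_cast hpos' a haa)
    have hprodA : ∏ a ∈ A, (a:ℝ) = (a₀:ℝ) * P' := by
      rw [← hins, Finset.prod_insert ha₀A']
    obtain ⟨C', hC'0, hC'⟩ := ih A' hcard' hpos'
    obtain ⟨CL, hCL0, hCL⟩ := ap_sum_est L k hL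
    set c : ℝ := (d':ℝ) / ((k.factorial : ℝ) * P') with hcdef
    have hc0 : 0 ≤ c := by
      apply div_nonneg (Nat.cast_nonneg d')
      positivity
    refine ⟨C' + c * CL, by positivity, ?_⟩
    intro n
    have hk1 : (k+1 : ℕ) ≠ 0 := by omega
    rw [if_neg hk1, Nat.succ_sub_one]
    -- the recursion, cast to ℝ
    have hrec : (pA ↑A n : ℝ) =
        ∑ t ∈ (range (n+1)).filter (fun t => t % a₀ = n % a₀), (pA ↑A' t : ℝ) := by
      rw [← hins, pA_insert a₀ ha₀pos A' ha₀A' hpos' n]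
      push_cast
      exact sum_range_reindex a₀ n ha₀pos (fun t => (pA ↑A' t : ℝ))
    set T := (range (n+1)).filter (fun t => t % a₀ = n % a₀) with hTdef
    set μ : ℕ → ℝ := fun t => if d' ∣ t then c * (t:ℝ)^k else 0 with hμdef
    have hIH : ∀ t : ℕ, |(pA ↑A' t : ℝ) - μ t| ≤ C' * (if k = 0 then 0 else ((t:ℝ)+1)^(k-1)) := by
      intro t
      have h0 := hC' t
      rw [← hd'def, ← hP'def] at h0
      have hμeq : μ t = if d' ∣ t then (d':ℝ) * (t:ℝ)^k / ((k.factorial:ℝ) * P') else 0 := by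
        show (if d' ∣ t then c * (t:ℝ)^k else 0) = _
        by_cases h : d' ∣ t
        · rw [if_pos h, if_pos h, hcdef]; ring
        · rw [if_neg h, if_neg h]
      rw [hμeq]
      exact h0
    -- bound 1
    have hTsub : T ⊆ range (n+1) := Finset.filter_subset _ _
    have hTcard : (T.card : ℝ) ≤ (n:ℝ)+1 := by
      have := Finset.card_le_card hTsub
      rw [Finset.card_range] at this
      exact_mod_cast this
    have hbound1 : |∑ t ∈ T, ((pA ↑A' t : ℝ) - μ t)| ≤ C' * ((n:ℝ)+1)^k := by
      calc |∑ t ∈ T, ((pA ↑A' t : ℝ) - μ t)| ≤ ∑ t ∈ T, |(pA ↑A' t : ℝ) - μ t| :=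
        Finset.abs_sum_le_sum_abs _ _
      _ ≤ ∑ _t ∈ T, C' * (if k = 0 then 0 else ((n:ℝ)+1)^(k-1)) := by
          apply Finset.sum_le_sum
          intro t ht
          refine le_trans (hIH t) ?_
          by_cases hk : k = 0
          · simp [hk]
          · rw [if_neg hk, if_neg hk]
            apply mul_le_mul_of_nonneg_left _ hC'0
            apply pow_le_pow_left₀ (by positivity)
            have htn : t ≤ n := by
              have := mem_range.mp (hTsub ht); omega
            have : (t:ℝ) ≤ (n:ℝ) := by exact_mod_cast htn
            linarith
      _ = (T.card : ℝ) * (C' * (if k = 0 then 0 else ((n:ℝ)+1)^(k-1))) := by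
          rw [Finset.sum_const, nsmul_eq_mul]
      _ ≤ C' * ((n:ℝ)+1)^k := by
          by_cases hk : k = 0
          · simp [hk]
            positivity
          · rw [if_neg hk]
            have h1 : (T.card : ℝ) * (C' * ((n:ℝ)+1)^(k-1)) ≤ ((n:ℝ)+1) * (C' * ((n:ℝ)+1)^(k-1)) :=
              mul_le_mul_of_nonneg_right hTcard (by positivity)
            have e : ((n:ℝ)+1) * (((n:ℝ)+1)^(k-1)) = ((n:ℝ)+1)^k := by
              rw [← pow_succ']
              congr 1
              omega
            have h2 : ((n:ℝ)+1) * (C' * ((n:ℝ)+1)^(k-1)) = C' * ((n:ℝ)+1)^k := by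
              rw [← e]; ring
            linarith
    -- bound 2 : main term
    have hsum_mu : ∑ t ∈ T, μ t = c * ∑ t ∈ T.filter (fun t => d' ∣ t), (t:ℝ)^k := by
      have h := Finset.sum_filter (s := T) (fun t => d' ∣ t) (fun t => c * (t:ℝ)^k)
      rw [Finset.mul_sum, h]
    have hmain : |∑ t ∈ T, μ t - (if d ∣ n then
        (d : ℝ) * (n:ℝ)^(k+1) / (((k+1).factorial : ℝ) * ∏ a ∈ A, (a:ℝ)) else 0)|
        ≤ c * CL * ((n:ℝ)+1)^k := by
      by_cases hdn : d ∣ n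
      · rw [if_pos hdn]
        obtain ⟨r, hr, hiff⟩ := cong_combine a₀ d' n ha₀pos hd'pos (hgcdA ▸ hdn)
        have hTT : T.filter (fun t => d' ∣ t) = (range (n+1)).filter (fun t => t % L = r) := by
          rw [hTdef, Finset.filter_filter]
          apply Finset.filter_congr
          intro t _
          rw [← hLdef] at hiff
          exact hiff t
        have hest := hCL r n hr
        -- identify constants
        have hdL : (d:ℝ) * (L:ℝ) = (a₀:ℝ) * (d':ℝ) := by
          have := Nat.gcd_mul_lcm a₀ d'
          rw [← hLdef] at this
          rw [hgcdA]
          exact_mod_cast this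
        have hconst : c * ((n:ℝ)^(k+1)/(((k:ℝ)+1)*(L:ℝ))) =
            (d : ℝ) * (n:ℝ)^(k+1) / (((k+1).factorial : ℝ) * ∏ a ∈ A, (a:ℝ)) := by
          rw [hprodA, hcdef]
          have hfact : ((k+1).factorial : ℝ) = ((k:ℝ)+1) * (k.factorial : ℝ) := by
            rw [Nat.factorial_succ]; push_cast; ring
          rw [hfact]
          have hkf : (k.factorial : ℝ) ≠ 0 := by positivity
          have hLne : (L:ℝ) ≠ 0 := by exact_mod_cast hL.ne'
          have ha₀ne : (a₀:ℝ) ≠ 0 := by exact_mod_cast ha₀pos.ne'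
          have hk1ne : ((k:ℝ)+1) ≠ 0 := by positivity
          field_simp
          linear_combination (-1 * (n:ℝ)^(k+1)) * hdL
        rw [hsum_mu, hTT, ← hconst]
        calc |c * ∑ t ∈ (range (n+1)).filter (fun t => t % L = r), (t:ℝ)^k -
              c * ((n:ℝ)^(k+1)/(((k:ℝ)+1)*(L:ℝ)))|
            = c * |∑ t ∈ (range (n+1)).filter (fun t => t % L = r), (t:ℝ)^k -
              (n:ℝ)^(k+1)/(((k:ℝ)+1)*(L:ℝ))| := by
              rw [← mul_sub, abs_mul, abs_of_nonneg hc0]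
          _ ≤ c * (CL * ((n:ℝ)+1)^k) := mul_le_mul_of_nonneg_left hest hc0
          _ = c * CL * ((n:ℝ)+1)^k := by ring
      · rw [if_neg hdn]
        have hTT : T.filter (fun t => d' ∣ t) = ∅ := by
          apply Finset.filter_false_of_mem
          intro t ht
          rw [hTdef] at ht
          have h1 := (Finset.mem_filter.mp ht).2
          intro h2
          exact cong_empty a₀ d' n (hgcdA ▸ hdn) t ⟨h1, h2⟩
        rw [hsum_mu, hTT]
        simp only [Finset.sum_empty, mul_zero, sub_zero, abs_zero]
        positivity
    -- combine
    have hsplit : (pA ↑A n : ℝ) - (if d ∣ n then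
        (d : ℝ) * (n:ℝ)^(k+1) / (((k+1).factorial : ℝ) * ∏ a ∈ A, (a:ℝ)) else 0)
        = (∑ t ∈ T, ((pA ↑A' t : ℝ) - μ t)) + (∑ t ∈ T, μ t - (if d ∣ n then
        (d : ℝ) * (n:ℝ)^(k+1) / (((k+1).factorial : ℝ) * ∏ a ∈ A, (a:ℝ)) else 0)) := by
      rw [hrec, Finset.sum_sub_distrib]
      ring
    rw [hsplit]
    calc |(∑ t ∈ T, ((pA ↑A' t : ℝ) - μ t)) + (∑ t ∈ T, μ t - _)|
        ≤ |∑ t ∈ T, ((pA ↑A' t : ℝ) - μ t)| + |∑ t ∈ T, μ t - _| := abs_add_le _ _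
      _ ≤ C' * ((n:ℝ)+1)^k + c * CL * ((n:ℝ)+1)^k := add_le_add hbound1 hmain
      _ = (C' + c * CL) * ((n:ℝ)+1)^k := by ring

theorem stmt0 (A : Finset ℕ) (k : ℕ) (hk : 0 < k) (hcard : A.card = k)
    (hpos : ∀ a ∈ A, 0 < a) (hgcd : A.gcd id = 1) :
    (fun n : ℕ => (pA ↑A n : ℝ) -
        (n : ℝ) ^ (k - 1) / ((k - 1).factorial * ∏ a ∈ A, (a : ℝ)))
      =O[atTop] (fun n : ℕ => (n : ℝ) ^ (k - 2)) := by
  obtain ⟨C, hC0, hC⟩ := main_ind (k-1) A (by omega) hpos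
  rw [Asymptotics.isBigO_iff]
  refine ⟨C * 2^(k-2), ?_⟩
  filter_upwards [Filter.eventually_ge_atTop 1] with n hn
  have h := hC n
  rw [hgcd, if_pos (one_dvd n)] at h
  rw [show (((1:ℕ):ℝ)) = (1:ℝ) from by norm_num, one_mul] at h
  have hnR : (1:ℝ) ≤ (n:ℝ) := by exact_mod_cast hn
  have h2 : (if k-1 = 0 then (0:ℝ) else ((n:ℝ)+1)^(k-1-1)) ≤ 2^(k-2) * (n:ℝ)^(k-2) := by
    by_cases hk1 : k-1 = 0
    · rw [if_pos hk1]; positivity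
    · rw [if_neg hk1]
      rw [show k-1-1 = k-2 from by omega]
      calc ((n:ℝ)+1)^(k-2) ≤ (2*(n:ℝ))^(k-2) :=
        pow_le_pow_left₀ (by positivity) (by linarith) _
      _ = 2^(k-2) * (n:ℝ)^(k-2) := mul_pow _ _ _
  have hnorm : ‖(n:ℝ)^(k-2)‖ = (n:ℝ)^(k-2) := by
    rw [Real.norm_eq_abs, abs_of_nonneg (by positivity)]
  rw [Real.norm_eq_abs, hnorm]
  calc |(pA ↑A n : ℝ) - (n:ℝ)^(k-1)/(((k-1).factorial : ℝ) * ∏ a ∈ A, (a:ℝ))|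
      ≤ C * (if k-1 = 0 then (0:ℝ) else ((n:ℝ)+1)^(k-1-1)) := h
    _ ≤ C * (2^(k-2) * (n:ℝ)^(k-2)) := mul_le_mul_of_nonneg_left h2 hC0
    _ = C * 2^(k-2) * (n:ℝ)^(k-2) := by ring
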